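/- Let n ≥ 1, let b : ℝ^n → ℝ^n be continuously differentiable with Jacobian J_b, let S ∈ ℝ^{n×n} be symmetric positive definite, and let C_S > 0 be such that S·J_b(x) + J_b(x)^T·S ⪯ −2C_S·S (i.e., −2C_S S − S J_b(x) − J_b(x)^T S is positive semidefinite) for every x ∈ ℝ^n. Suppose X, Y : [0,∞) → ℝ^n are differentiable and satisfy X'(t) − Y'(t) = b(X(t)) − b(Y(t)) for all t ≥ 0. Then for all t ≥ 0, (X(t) − Y(t))^T S (X(t) − Y(t)) ≤ e^{−2C_S t} · (X(0) − Y(0))^T S (X(0) − Y(0)). In particular, d/dt [(X(t) − Y(t))^T S (X(t) − Y(t))] ≤ −2C_S (X(t) − Y(t))^T S (X(t) − Y(t)). -/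

import Mathlib

open Matrix

lemma aux_contr (n : ℕ) (S J : Matrix (Fin n) (Fin n) ℝ) (hSsym : S.IsSymm) (CS : ℝ)
    (h : ((-(2 * CS)) • S - (S * J + Jᵀ * S)).PosSemidef) (z : EuclideanSpace ℝ (Fin n)) :
    (inner ℝ (Matrix.toEuclideanLin J z) (Matrix.toEuclideanLin S z) : ℝ) ≤
      -CS * (inner ℝ z (Matrix.toEuclideanLin S z) : ℝ) := by
  set u : Fin n → ℝ := WithLp.equiv 2 (Fin n → ℝ) z with hu
  have h0 := h.dotProduct_mulVec_nonneg u
  simp only [Matrix.sub_mulVec, Matrix.add_mulVec, Matrix.smul_mulVec,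
    ← Matrix.mulVec_mulVec, dotProduct_sub, dotProduct_add, dotProduct_smul,
    star_trivial, smul_eq_mul] at h0
  have f1 : ∀ w : Fin n → ℝ, u ⬝ᵥ (S *ᵥ w) = (S *ᵥ u) ⬝ᵥ w := by
    intro w
    rw [Matrix.dotProduct_mulVec]
    congr 1
    rw [← hSsym.eq, Matrix.vecMul_transpose, hSsym.eq]
  have f2 : u ⬝ᵥ (Jᵀ *ᵥ (S *ᵥ u)) = (J *ᵥ u) ⬝ᵥ (S *ᵥ u) := by
    rw [Matrix.dotProduct_mulVec, Matrix.vecMul_transpose]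
  have f3 : u ⬝ᵥ (S *ᵥ (J *ᵥ u)) = (J *ᵥ u) ⬝ᵥ (S *ᵥ u) := by
    rw [f1, dotProduct_comm]
  have e1 : (inner ℝ (Matrix.toEuclideanLin J z) (Matrix.toEuclideanLin S z) : ℝ)
      = (J *ᵥ u) ⬝ᵥ (S *ᵥ u) := by
    rw [EuclideanSpace.inner_eq_star_dotProduct]
    simp [star_trivial]
    exact dotProduct_comm _ _
  have e2 : (inner ℝ z (Matrix.toEuclideanLin S z) : ℝ) = u ⬝ᵥ (S *ᵥ u) := by
    rw [EuclideanSpace.inner_eq_star_dotProduct]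
    simp [star_trivial]
    exact dotProduct_comm _ _
  rw [e1, e2]
  rw [f2, f3] at h0
  linarith

lemma aux_mv (n : ℕ) (b : EuclideanSpace ℝ (Fin n) → EuclideanSpace ℝ (Fin n))
    (hb : ContDiff ℝ 1 b)
    (Jb : EuclideanSpace ℝ (Fin n) → Matrix (Fin n) (Fin n) ℝ)
    (hJb : ∀ x, Matrix.toEuclideanLin (Jb x) =
      (fderiv ℝ b x : EuclideanSpace ℝ (Fin n) →ₗ[ℝ] EuclideanSpace ℝ (Fin n)))
    (S : Matrix (Fin n) (Fin n) ℝ) (hSsym : S.IsSymm) (CS : ℝ)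
    (hcontr : ∀ x, ((-(2 * CS)) • S - (S * Jb x + (Jb x)ᵀ * S)).PosSemidef)
    (u v : EuclideanSpace ℝ (Fin n)) :
    (inner ℝ (b u - b v) (Matrix.toEuclideanLin S (u - v)) : ℝ) ≤
      -CS * (inner ℝ (u - v) (Matrix.toEuclideanLin S (u - v)) : ℝ) := by
  set z := u - v with hz
  set w := Matrix.toEuclideanLin S z with hw
  set c : ℝ := CS * (inner ℝ z w : ℝ) with hc
  set φ : ℝ → ℝ := fun s => (inner ℝ (b (v + s • z)) w : ℝ) + c * s with hφ
  have hder : ∀ x (y : EuclideanSpace ℝ (Fin n)),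
      (inner ℝ ((fderiv ℝ b x) y) (Matrix.toEuclideanLin S y) : ℝ) ≤
        -CS * (inner ℝ y (Matrix.toEuclideanLin S y) : ℝ) := by
    intro x y
    have := aux_contr n S (Jb x) hSsym CS (hcontr x) y
    rwa [hJb x] at this
  have hφd : ∀ s : ℝ, HasDerivAt φ
      ((inner ℝ ((fderiv ℝ b (v + s • z)) z) w : ℝ) + c) s := by
    intro s
    have hcv : HasDerivAt (fun s : ℝ => v + s • z) z s := by
      simpa using ((hasDerivAt_id s).smul_const z).const_add v
    have hbd := (hb.differentiable one_ne_zero (v + s • z)).hasFDerivAt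
    have h1 : HasDerivAt (fun s : ℝ => b (v + s • z)) ((fderiv ℝ b (v + s • z)) z) s :=
      hbd.comp_hasDerivAt s hcv
    have h2 := h1.inner ℝ (hasDerivAt_const s w)
    simp only [inner_zero_right, zero_add] at h2
    have h3 : HasDerivAt (fun s : ℝ => c * s) c s := by
      simpa using (hasDerivAt_id s).const_mul c
    exact h2.add h3
  have hmono : Antitone φ := by
    apply antitone_of_deriv_nonpos (fun s => (hφd s).differentiableAt)
    intro s
    rw [(hφd s).deriv]
    have := hder (v + s • z) z
    rw [← hw] at this
    simp only [hc]
    linarith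
  have h10 : φ 1 ≤ φ 0 := hmono zero_le_one
  simp only [hφ, one_smul, zero_smul, add_zero, mul_one, mul_zero] at h10
  have hvz : v + z = u := by rw [hz]; abel
  rw [hvz] at h10
  rw [inner_sub_left]
  simp only [hc] at h10
  linarith

theorem stmt11 (n : ℕ) (hn : 1 ≤ n)
    (b : EuclideanSpace ℝ (Fin n) → EuclideanSpace ℝ (Fin n)) (hb : ContDiff ℝ 1 b)
    -- `Jb x` is the Jacobian matrix of `b` at `x`
    (Jb : EuclideanSpace ℝ (Fin n) → Matrix (Fin n) (Fin n) ℝ)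
    (hJb : ∀ x, Matrix.toEuclideanLin (Jb x) =
      (fderiv ℝ b x : EuclideanSpace ℝ (Fin n) →ₗ[ℝ] EuclideanSpace ℝ (Fin n)))
    (S : Matrix (Fin n) (Fin n) ℝ) (hSsym : S.IsSymm) (hSpos : S.PosDef)
    (CS : ℝ) (hCS : 0 < CS)
    -- `S·Jb(x) + Jb(x)ᵀ·S ⪯ −2 C_S S` for all `x`
    (hcontr : ∀ x, ((-(2 * CS)) • S - (S * Jb x + (Jb x)ᵀ * S)).PosSemidef)
    (X Y : ℝ → EuclideanSpace ℝ (Fin n))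
    (dX dY : ℝ → EuclideanSpace ℝ (Fin n))
    (hX : ∀ t : ℝ, 0 ≤ t → HasDerivWithinAt X (dX t) (Set.Ici 0) t)
    (hY : ∀ t : ℝ, 0 ≤ t → HasDerivWithinAt Y (dY t) (Set.Ici 0) t)
    -- `X'(t) − Y'(t) = b(X(t)) − b(Y(t))`
    (hode : ∀ t : ℝ, 0 ≤ t → dX t - dY t = b (X t) - b (Y t)) :
    (∀ t : ℝ, 0 ≤ t →
      (inner ℝ (X t - Y t) (Matrix.toEuclideanLin S (X t - Y t)) : ℝ) ≤
        Real.exp (-(2 * CS) * t) *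
          (inner ℝ (X 0 - Y 0) (Matrix.toEuclideanLin S (X 0 - Y 0)) : ℝ)) ∧
    (∀ t : ℝ, 0 ≤ t →
      derivWithin
          (fun s => (inner ℝ (X s - Y s) (Matrix.toEuclideanLin S (X s - Y s)) : ℝ))
          (Set.Ici 0) t ≤
        -(2 * CS) * (inner ℝ (X t - Y t) (Matrix.toEuclideanLin S (X t - Y t)) : ℝ)) := by
  have hHerm : S.IsHermitian := by
    rw [Matrix.IsHermitian, Matrix.conjTranspose_eq_transpose_of_trivial]; exact hSsym
  have hsymL : (Matrix.toEuclideanLin S).IsSymmetric :=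
    Matrix.isHermitian_iff_isSymmetric.mp hHerm
  set L : EuclideanSpace ℝ (Fin n) →L[ℝ] EuclideanSpace ℝ (Fin n) :=
    LinearMap.toContinuousLinearMap (Matrix.toEuclideanLin S) with hL
  set V : ℝ → ℝ :=
    fun s => (inner ℝ (X s - Y s) (Matrix.toEuclideanLin S (X s - Y s)) : ℝ) with hVdef
  set v' : ℝ → ℝ := fun t =>
    (inner ℝ (X t - Y t) (Matrix.toEuclideanLin S (b (X t) - b (Y t))) : ℝ) +
      (inner ℝ (b (X t) - b (Y t)) (Matrix.toEuclideanLin S (X t - Y t)) : ℝ) with hv'def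
  have hZ : ∀ t : ℝ, 0 ≤ t →
      HasDerivWithinAt (fun s => X s - Y s) (b (X t) - b (Y t)) (Set.Ici 0) t := by
    intro t ht
    rw [← hode t ht]
    exact (hX t ht).sub (hY t ht)
  have hSZ : ∀ t : ℝ, 0 ≤ t →
      HasDerivWithinAt (fun s => Matrix.toEuclideanLin S (X s - Y s))
        (Matrix.toEuclideanLin S (b (X t) - b (Y t))) (Set.Ici 0) t := by
    intro t ht
    exact L.hasFDerivAt.comp_hasDerivWithinAt t (hZ t ht)
  have hV : ∀ t : ℝ, 0 ≤ t → HasDerivWithinAt V (v' t) (Set.Ici 0) t := by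
    intro t ht
    exact (hZ t ht).inner ℝ (hSZ t ht)
  have hbound : ∀ t : ℝ, 0 ≤ t → v' t ≤ -(2 * CS) * V t := by
    intro t ht
    have hmv := aux_mv n b hb Jb hJb S hSsym CS hcontr (X t) (Y t)
    have hsw : (inner ℝ (X t - Y t) (Matrix.toEuclideanLin S (b (X t) - b (Y t))) : ℝ)
        = (inner ℝ (b (X t) - b (Y t)) (Matrix.toEuclideanLin S (X t - Y t)) : ℝ) := by
      rw [← hsymL (X t - Y t) (b (X t) - b (Y t)), real_inner_comm]
    rw [hv'def]
    simp only [hsw]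
    rw [hVdef]
    linarith
  constructor
  · intro t ht
    set W : ℝ → ℝ := fun s => Real.exp (2 * CS * s) * V s with hWdef
    have hW : ∀ x : ℝ, 0 ≤ x → HasDerivWithinAt W
        (Real.exp (2 * CS * x) * (2 * CS) * V x + Real.exp (2 * CS * x) * v' x)
        (Set.Ici 0) x := by
      intro x hx
      have hE : HasDerivAt (fun s : ℝ => Real.exp (2 * CS * s))
          (Real.exp (2 * CS * x) * (2 * CS)) x := by
        have h0 : HasDerivAt (fun s : ℝ => 2 * CS * s) (2 * CS) x := by
          simpa using (hasDerivAt_id x).const_mul (2 * CS)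
        simpa [mul_comm] using h0.exp
      exact hE.hasDerivWithinAt.mul (hV x hx)
    have hanti : AntitoneOn W (Set.Ici (0:ℝ)) := by
      apply antitoneOn_of_deriv_nonpos (convex_Ici 0)
      · intro x hx
        exact (hW x hx).continuousWithinAt
      · intro x hx
        rw [interior_Ici] at hx
        exact ((hW x (le_of_lt hx)).hasDerivAt (Ici_mem_nhds hx)).differentiableAt
          |>.differentiableWithinAt
      · intro x hx
        rw [interior_Ici] at hx
        have hda := (hW x (le_of_lt hx)).hasDerivAt (Ici_mem_nhds hx)
        rw [hda.deriv]
        have hb' := hbound x (le_of_lt hx)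
        have hepos := Real.exp_pos (2 * CS * x)
        nlinarith
    have hWt : W t ≤ W 0 := hanti (Set.self_mem_Ici) ht ht
    have hW0 : W 0 = V 0 := by simp [hWdef]
    rw [hW0] at hWt
    have key : V t ≤ Real.exp (-(2 * CS * t)) * V 0 := by
      have h1 : Real.exp (-(2 * CS * t)) * (Real.exp (2 * CS * t) * V t)
          ≤ Real.exp (-(2 * CS * t)) * V 0 :=
        mul_le_mul_of_nonneg_left hWt (le_of_lt (Real.exp_pos _))
      rwa [← mul_assoc, ← Real.exp_add, neg_add_cancel, Real.exp_zero, one_mul] at h1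
    rw [neg_mul]
    exact key
  · intro t ht
    have hdw : derivWithin V (Set.Ici 0) t = v' t :=
      (hV t ht).derivWithin (uniqueDiffOn_Ici 0 t ht)
    rw [hdw]
    exact hbound t ht
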